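/- Let F ∈ L²(μ) and let n, m be nonnegative integers. Then Δ_{n,m}(F,μ) ≠ 0 if and only if every solution (P,Q) of the (n,m) Padé-orthogonal problem for F with respect to μ satisfies deg Q = m. -/

import Mathlib

open MeasureTheory Polynomial Filter Topology Set
open scoped ENNReal

/-- The inner product `⟨g,h⟩_μ := ∫ g(ζ)·conj(h(ζ)) dμ(ζ)`. -/
noncomputable def innerMu (μ : Measure ℂ) (g h : ℂ → ℂ) : ℂ :=
  ∫ ζ, g ζ * (starRingEnd ℂ) (h ζ) ∂μ

/-- The (topological) support of a measure on `ℂ`: the set of points all of whose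
neighborhoods have positive measure. -/
def measSupp (μ : Measure ℂ) : Set ℂ :=
  {z : ℂ | ∀ U ∈ nhds z, μ U ≠ 0}

/-- The second type functions `s_n(z) := ∫ conj(p_n(ζ))/(z − ζ) dμ(ζ)`. -/
noncomputable def secondKind (μ : Measure ℂ) (p : ℕ → Polynomial ℂ) (n : ℕ) (z : ℂ) : ℂ :=
  ∫ ζ, (starRingEnd ℂ) ((p n).eval ζ) / (z - ζ) ∂μ

/-- `(P,Q)` is a solution of the `(n,m)` Padé-orthogonal problem for `F` with respect to
`μ`: `deg P ≤ n`, `deg Q ≤ m`, `Q ≢ 0`, and `⟨QF − P, p_j⟩_μ = 0` for `j = 0,…,n+m`. -/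
def IsPadeSol (μ : Measure ℂ) (p : ℕ → Polynomial ℂ) (F : ℂ → ℂ) (n m : ℕ)
    (P Q : Polynomial ℂ) : Prop :=
  P.degree ≤ n ∧ Q.degree ≤ m ∧ Q ≠ 0 ∧
  ∀ j : ℕ, j ≤ n + m →
    innerMu μ (fun z => Q.eval z * F z - P.eval z) (fun z => (p j).eval z) = 0

/-- `Δ_{n,m}(F,μ)`: the determinant of the `m×m` matrix whose `(i,j)` entry (with
`1`-based indexing) is `⟨z^{j−1}F, p_{n+i}⟩_μ`. -/
noncomputable def Delta (μ : Measure ℂ) (p : ℕ → Polynomial ℂ) (F : ℂ → ℂ) (n m : ℕ) : ℂ :=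
  Matrix.det (Matrix.of fun i j : Fin m =>
    innerMu μ (fun z => z ^ (j : ℕ) * F z) (fun z => (p (n + 1 + i)).eval z))

/-! ### Auxiliary lemmas -/

lemma measSupp_compl_null (μ : Measure ℂ) : μ (measSupp μ)ᶜ = 0 := by
  apply measure_null_of_locally_null
  intro x hx
  simp only [measSupp, mem_compl_iff, mem_setOf_eq, not_forall, not_not] at hx
  obtain ⟨U, hU, hU0⟩ := hx
  exact ⟨U, nhdsWithin_le_nhds hU, hU0⟩

lemma ae_mem_measSupp (μ : Measure ℂ) : ∀ᵐ z ∂μ, z ∈ measSupp μ := by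
  have h := measSupp_compl_null μ
  rw [ae_iff]
  exact h

lemma poly_ae_bound (μ : Measure ℂ) (hsuppC : IsCompact (measSupp μ)) (A : Polynomial ℂ) :
    ∃ C : ℝ, 0 ≤ C ∧ ∀ᵐ z ∂μ, ‖A.eval z‖ ≤ C := by
  obtain ⟨C, hC⟩ := hsuppC.exists_bound_of_continuousOn A.continuous.continuousOn
  refine ⟨max C 0, le_max_right _ _, ?_⟩
  filter_upwards [ae_mem_measSupp μ] with z hz
  exact (hC z hz).trans (le_max_left _ _)

lemma integrable_pp (μ : Measure ℂ) [IsFiniteMeasure μ] (hsuppC : IsCompact (measSupp μ))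
    (A B : Polynomial ℂ) :
    Integrable (fun z => A.eval z * (starRingEnd ℂ) (B.eval z)) μ := by
  obtain ⟨C₁, hC₁, h₁⟩ := poly_ae_bound μ hsuppC A
  obtain ⟨C₂, hC₂, h₂⟩ := poly_ae_bound μ hsuppC B
  refine Integrable.mono' (integrable_const (C₁ * C₂))
    ((A.continuous.aestronglyMeasurable).mul
      ((Complex.continuous_conj.comp B.continuous).aestronglyMeasurable)) ?_
  filter_upwards [h₁, h₂] with z hz1 hz2
  rw [norm_mul]
  calc ‖A.eval z‖ * ‖(starRingEnd ℂ) (B.eval z)‖ = ‖A.eval z‖ * ‖B.eval z‖ := by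
        rw [RCLike.norm_conj]
    _ ≤ C₁ * C₂ := mul_le_mul hz1 hz2 (norm_nonneg _) hC₁

lemma integrable_pFp (μ : Measure ℂ) [IsFiniteMeasure μ] (hsuppC : IsCompact (measSupp μ))
    (F : ℂ → ℂ) (hF : MemLp F 2 μ) (A B : Polynomial ℂ) :
    Integrable (fun z => A.eval z * F z * (starRingEnd ℂ) (B.eval z)) μ := by
  obtain ⟨C₁, hC₁, h₁⟩ := poly_ae_bound μ hsuppC A
  obtain ⟨C₂, hC₂, h₂⟩ := poly_ae_bound μ hsuppC B
  have hFi : Integrable F μ := hF.integrable (by norm_num)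
  refine Integrable.mono' ((hFi.norm.const_mul (C₁ * C₂)))
    (((A.continuous.aestronglyMeasurable).mul hF.aestronglyMeasurable).mul
      ((Complex.continuous_conj.comp B.continuous).aestronglyMeasurable)) ?_
  filter_upwards [h₁, h₂] with z hz1 hz2
  rw [norm_mul, norm_mul, RCLike.norm_conj]
  calc ‖A.eval z‖ * ‖F z‖ * ‖B.eval z‖ ≤ C₁ * ‖F z‖ * C₂ := by
        apply mul_le_mul _ hz2 (norm_nonneg _) (by positivity)
        exact mul_le_mul_of_nonneg_right hz1 (norm_nonneg _)
    _ = C₁ * C₂ * ‖F z‖ := by ring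

/-- Expansion of `⟨QF, h⟩` into powers of `z`. -/
lemma inner_polyF_expand (μ : Measure ℂ) [IsFiniteMeasure μ] (hsuppC : IsCompact (measSupp μ))
    (F : ℂ → ℂ) (hF : MemLp F 2 μ) (Q B : Polynomial ℂ) (N : ℕ) (hN : Q.natDegree < N) :
    innerMu μ (fun z => Q.eval z * F z) (fun z => B.eval z)
      = ∑ k ∈ Finset.range N, Q.coeff k *
          innerMu μ (fun z => z ^ k * F z) (fun z => B.eval z) := by
  unfold innerMu
  have h1 : ∀ z : ℂ, Q.eval z * F z * (starRingEnd ℂ) (B.eval z)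
      = ∑ k ∈ Finset.range N, Q.coeff k * (z ^ k * F z * (starRingEnd ℂ) (B.eval z)) := by
    intro z
    rw [Polynomial.eval_eq_sum_range' hN, Finset.sum_mul, Finset.sum_mul]
    exact Finset.sum_congr rfl fun k _ => by ring
  simp_rw [h1]
  rw [integral_finset_sum]
  · exact Finset.sum_congr rfl fun k _ => integral_const_mul _ _
  · intro k _
    have := (integrable_pFp μ hsuppC F hF (X ^ k) B).const_mul (Q.coeff k)
    simpa using this

/-- Polynomials of degree `< d` are orthogonal to `p j` for `j ≥ d`. -/
lemma inner_poly_orth (μ : Measure ℂ) [IsFiniteMeasure μ] (hsuppC : IsCompact (measSupp μ))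
    (p : ℕ → Polynomial ℂ)
    (hdeg : ∀ n : ℕ, (p n).degree = n)
    (hlead : ∀ n : ℕ, 0 < ((p n).leadingCoeff).re ∧ ((p n).leadingCoeff).im = 0)
    (horth : ∀ n k : ℕ,
      innerMu μ (fun z => (p n).eval z) (fun z => (p k).eval z) = if n = k then 1 else 0) :
    ∀ d : ℕ, ∀ P : Polynomial ℂ, P.degree < (d : ℕ) → ∀ j, d ≤ j →
      innerMu μ (fun z => P.eval z) (fun z => (p j).eval z) = 0 := by
  intro d
  induction d with
  | zero =>
    intro P hP j _
    have hP0 : P = 0 := Polynomial.degree_eq_bot.mp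
      (Nat.WithBot.lt_zero_iff.mp (by exact_mod_cast hP))
    simp [innerMu, hP0]
  | succ d ih =>
    intro P hP j hj
    set L := (p d).leadingCoeff with hLdef
    have hL : L ≠ 0 := by
      intro h
      have := (hlead d).1
      rw [← hLdef, h] at this
      simp at this
    set c := P.coeff d / L with hcdef
    set P' := P - C c * p d with hP'def
    have hnd : (p d).natDegree = d := natDegree_eq_of_degree_eq_some (hdeg d)
    have hcoefd : (p d).coeff d = L := by
      have h := Polynomial.coeff_natDegree (p := p d)
      rwa [hnd] at h
    have hP' : P'.degree < (d : ℕ) := by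
      rw [Polynomial.degree_lt_iff_coeff_zero]
      intro k hk
      rcases eq_or_lt_of_le hk with rfl | hk'
      · have h3 : P'.coeff d = P.coeff d - c * (p d).coeff d := by
          simp [hP'def]
        rw [h3, hcoefd, hcdef, div_mul_cancel₀ _ hL, sub_self]
      · have h1 : P.coeff k = 0 := by
          apply coeff_eq_zero_of_degree_lt
          exact lt_of_lt_of_le hP (by exact_mod_cast hk')
        have h2 : (p d).coeff k = 0 := by
          apply coeff_eq_zero_of_degree_lt
          rw [hdeg d]; exact_mod_cast hk'
        simp [hP'def, coeff_sub, coeff_C_mul, h1, h2]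
    have hsplit : ∀ z : ℂ, P.eval z = P'.eval z + c * (p d).eval z := by
      intro z
      rw [hP'def, eval_sub, eval_mul, eval_C]
      ring
    have key : innerMu μ (fun z => P.eval z) (fun z => (p j).eval z)
        = innerMu μ (fun z => P'.eval z) (fun z => (p j).eval z)
          + c * innerMu μ (fun z => (p d).eval z) (fun z => (p j).eval z) := by
      unfold innerMu
      have h2 : ∀ z : ℂ, P.eval z * (starRingEnd ℂ) ((p j).eval z)
          = P'.eval z * (starRingEnd ℂ) ((p j).eval z)
            + c * ((p d).eval z * (starRingEnd ℂ) ((p j).eval z)) := by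
        intro z; rw [hsplit z]; ring
      simp_rw [h2]
      rw [integral_add (integrable_pp μ hsuppC P' (p j))
        ((integrable_pp μ hsuppC (p d) (p j)).const_mul c), integral_const_mul]
    rw [key, ih P' hP' j (le_trans (Nat.le_succ d) hj), horth d j,
      if_neg (by omega), zero_add, mul_zero]

/-- `⟨∑ c_j p_j, p_{j'}⟩` expands by linearity. -/
lemma innerMu_eval_sum (μ : Measure ℂ) [IsFiniteMeasure μ] (hsuppC : IsCompact (measSupp μ))
    (p : ℕ → Polynomial ℂ) (c : ℕ → ℂ) (s : Finset ℕ) (j' : ℕ) :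
    innerMu μ (fun z => (∑ j ∈ s, C (c j) * p j).eval z) (fun z => (p j').eval z)
      = ∑ j ∈ s, c j * innerMu μ (fun z => (p j).eval z) (fun z => (p j').eval z) := by
  unfold innerMu
  have h1 : ∀ z : ℂ, (∑ j ∈ s, C (c j) * p j).eval z * (starRingEnd ℂ) ((p j').eval z)
      = ∑ j ∈ s, c j * ((p j).eval z * (starRingEnd ℂ) ((p j').eval z)) := by
    intro z
    rw [Polynomial.eval_finset_sum, Finset.sum_mul]
    exact Finset.sum_congr rfl fun j _ => by simp; ring
  simp_rw [h1]
  rw [integral_finset_sum _ (fun j _ => (integrable_pp μ hsuppC (p j) (p j')).const_mul (c j))]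
  exact Finset.sum_congr rfl fun j _ => integral_const_mul _ _

/-- `⟨QF − P, h⟩ = ⟨QF, h⟩ − ⟨P, h⟩`. -/
lemma inner_sub_split (μ : Measure ℂ) [IsFiniteMeasure μ] (hsuppC : IsCompact (measSupp μ))
    (F : ℂ → ℂ) (hF : MemLp F 2 μ) (Q P B : Polynomial ℂ) :
    innerMu μ (fun z => Q.eval z * F z - P.eval z) (fun z => B.eval z)
      = innerMu μ (fun z => Q.eval z * F z) (fun z => B.eval z)
        - innerMu μ (fun z => P.eval z) (fun z => B.eval z) := by
  unfold innerMu
  have h1 : ∀ z : ℂ, (Q.eval z * F z - P.eval z) * (starRingEnd ℂ) (B.eval z)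
      = Q.eval z * F z * (starRingEnd ℂ) (B.eval z) - P.eval z * (starRingEnd ℂ) (B.eval z) := by
    intro z; ring
  simp_rw [h1]
  exact integral_sub (integrable_pFp μ hsuppC F hF Q B) (integrable_pp μ hsuppC P B)

/-- Let `F ∈ L²(μ)` and let `n, m` be nonnegative integers. Then `Δ_{n,m}(F,μ) ≠ 0` if and
only if every solution `(P,Q)` of the `(n,m)` Padé-orthogonal problem for `F` with respect
to `μ` satisfies `deg Q = m`. -/
theorem delta_ne_zero_iff
    (μ : Measure ℂ) [IsFiniteMeasure μ]
    (hsuppInf : (measSupp μ).Infinite) (hsuppC : IsCompact (measSupp μ))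
    (p : ℕ → Polynomial ℂ)
    (hdeg : ∀ n : ℕ, (p n).degree = n)
    (hlead : ∀ n : ℕ, 0 < ((p n).leadingCoeff).re ∧ ((p n).leadingCoeff).im = 0)
    (horth : ∀ n k : ℕ,
      innerMu μ (fun z => (p n).eval z) (fun z => (p k).eval z) = if n = k then 1 else 0)
    (F : ℂ → ℂ) (hF : MemLp F 2 μ) (n m : ℕ) :
    Delta μ p F n m ≠ 0 ↔
      ∀ P Q : Polynomial ℂ, IsPadeSol μ p F n m P Q → Q.degree = m := by
  set M : Matrix (Fin m) (Fin m) ℂ := Matrix.of fun i j : Fin m =>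
    innerMu μ (fun z => z ^ (j : ℕ) * F z) (fun z => (p (n + 1 + i)).eval z) with hM
  have hDelta : Delta μ p F n m = M.det := rfl
  constructor
  · -- Δ ≠ 0 → every solution has deg Q = m
    intro hΔ P Q hPQ
    obtain ⟨hP, hQ, hQ0, hort⟩ := hPQ
    by_contra hne
    have hQlt : Q.degree < (m : ℕ) := lt_of_le_of_ne hQ hne
    have hQnat : Q.natDegree < m := (natDegree_lt_iff_degree_lt hQ0).mpr hQlt
    set v : Fin m → ℂ := fun k => Q.coeff k with hv
    have hMv : M.mulVec v = 0 := by
      funext i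
      have hi : n + 1 + (i : ℕ) ≤ n + m := by omega
      have h0 := hort (n + 1 + i) hi
      rw [inner_sub_split μ hsuppC F hF Q P (p (n + 1 + i))] at h0
      have hPo : innerMu μ (fun z => P.eval z) (fun z => (p (n + 1 + i)).eval z) = 0 := by
        apply inner_poly_orth μ hsuppC p hdeg hlead horth (n + 1) P
          (lt_of_le_of_lt hP (by exact_mod_cast Nat.lt_succ_self n)) (n + 1 + i) (by omega)
      rw [hPo, sub_zero,
        inner_polyF_expand μ hsuppC F hF Q (p (n + 1 + i)) m hQnat] at h0
      simp only [Matrix.mulVec, dotProduct, Pi.zero_apply]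
      rw [← h0, ← Fin.sum_univ_eq_sum_range
        (fun k => Q.coeff k * innerMu μ (fun z => z ^ k * F z)
          (fun z => (p (n + 1 + i)).eval z)) m]
      exact Finset.sum_congr rfl fun k _ => by rw [hM]; simp [v]; ring
    have hdet0 : M.det ≠ 0 := by rwa [hDelta] at hΔ
    have hv0 : v = 0 := by
      by_contra hvne
      exact hdet0 (Matrix.exists_mulVec_eq_zero_iff.mp ⟨v, hvne, hMv⟩)
    apply hQ0
    ext k
    rcases lt_or_ge k m with hk | hk
    · have := congrFun hv0 ⟨k, hk⟩
      simpa [hv] using this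
    · rw [coeff_zero]
      exact coeff_eq_zero_of_degree_lt (lt_of_lt_of_le hQlt (by exact_mod_cast hk))
  · -- contrapositive: Δ = 0 → there is a solution with deg Q < m
    intro hall
    intro hΔ0
    rw [hDelta] at hΔ0
    obtain ⟨v, hvne, hMv⟩ := Matrix.exists_mulVec_eq_zero_iff.mpr hΔ0
    set Q : Polynomial ℂ := ∑ k : Fin m, C (v k) * X ^ (k : ℕ) with hQdef
    have hQc : ∀ k : Fin m, Q.coeff k = v k := by
      intro k
      rw [hQdef, finset_sum_coeff]
      have : ∀ j : Fin m, (C (v j) * X ^ (j : ℕ)).coeff k = if k = j then v j else 0 := by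
        intro j
        rw [coeff_C_mul, coeff_X_pow]
        by_cases h : k = j
        · simp [h]
        · rw [if_neg (fun hc => h (Fin.ext hc)), if_neg h, mul_zero]
      simp_rw [this]
      simp
    have hQdeg : Q.degree < (m : ℕ) := by
      rw [hQdef]
      apply lt_of_le_of_lt (Polynomial.degree_sum_le _ _)
      rw [Finset.sup_lt_iff (by exact_mod_cast WithBot.bot_lt_coe m)]
      intro k _
      exact lt_of_le_of_lt (Polynomial.degree_C_mul_X_pow_le _ _) (by exact_mod_cast k.isLt)
    have hQ0 : Q ≠ 0 := by
      obtain ⟨k, hk⟩ := Function.ne_iff.mp hvne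
      intro h
      apply hk
      simp only [Pi.zero_apply]
      rw [← hQc k, h, coeff_zero]
    have hQnat : Q.natDegree < m := (natDegree_lt_iff_degree_lt hQ0).mpr hQdeg
    set c : ℕ → ℂ := fun j =>
      innerMu μ (fun z => Q.eval z * F z) (fun z => (p j).eval z) with hc
    set P : Polynomial ℂ := ∑ j ∈ Finset.range (n + 1), C (c j) * p j with hPdef
    have hPdeg : P.degree ≤ (n : ℕ) := by
      rw [hPdef]
      apply le_trans (Polynomial.degree_sum_le _ _)
      rw [Finset.sup_le_iff]
      intro j hj
      calc (C (c j) * p j).degree ≤ (C (c j)).degree + (p j).degree := degree_mul_le _ _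
        _ ≤ 0 + (j : WithBot ℕ) := add_le_add degree_C_le (le_of_eq (hdeg j))
        _ = (j : WithBot ℕ) := by rw [zero_add]
        _ ≤ (n : WithBot ℕ) := by
            exact_mod_cast Nat.lt_succ_iff.mp (Finset.mem_range.mp hj)
    have hPinner : ∀ j' : ℕ, innerMu μ (fun z => P.eval z) (fun z => (p j').eval z)
        = if j' ≤ n then c j' else 0 := by
      intro j'
      rw [hPdef, innerMu_eval_sum μ hsuppC p c (Finset.range (n + 1)) j']
      by_cases h : j' ≤ n
      · rw [Finset.sum_eq_single j']
        · rw [horth j' j', if_pos rfl, mul_one, if_pos h]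
        · intro j _ hjj
          rw [horth j j', if_neg hjj, mul_zero]
        · intro habs
          exact absurd (Finset.mem_range.mpr (by omega)) habs
      · rw [if_neg h]
        apply Finset.sum_eq_zero
        intro j hj
        have : j ≠ j' := by
          have := Finset.mem_range.mp hj; omega
        rw [horth j j', if_neg this, mul_zero]
    have hQFinner : ∀ i : Fin m,
        innerMu μ (fun z => Q.eval z * F z) (fun z => (p (n + 1 + i)).eval z) = 0 := by
      intro i
      rw [inner_polyF_expand μ hsuppC F hF Q (p (n + 1 + i)) m hQnat]
      have := congrFun hMv i
      simp only [Matrix.mulVec, dotProduct, Pi.zero_apply] at this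
      rw [← Fin.sum_univ_eq_sum_range
        (fun k => Q.coeff k * innerMu μ (fun z => z ^ k * F z)
          (fun z => (p (n + 1 + i)).eval z)) m, ← this]
      exact Finset.sum_congr rfl fun k _ => by rw [hM]; simp [hQc k]; ring
    have hsol : IsPadeSol μ p F n m P Q := by
      refine ⟨hPdeg, le_of_lt hQdeg, hQ0, ?_⟩
      intro j hj
      rw [inner_sub_split μ hsuppC F hF Q P (p j), hPinner j]
      by_cases h : j ≤ n
      · rw [if_pos h, hc, sub_self]
      · rw [if_neg h, sub_zero]
        have hjm : j - n - 1 < m := by omega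
        have : j = n + 1 + (⟨j - n - 1, hjm⟩ : Fin m) := by simp; omega
        rw [this]
        exact hQFinner ⟨j - n - 1, hjm⟩
    have := hall P Q hsol
    rw [this] at hQdeg
    exact lt_irrefl _ hQdeg
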